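/- Let H be an H-class of a semigroup S and let Γ_H = {φ_s : H → H, a ↦ sa | s ∈ S^1, sH ⊆ H}. Then Γ_H is a group acting simply transitively on H: for all x, y ∈ H there is a unique g ∈ Γ_H with g(x) = y. -/

import Mathlib

open scoped Classical

section

variable {S : Type*} [Semigroup S]

/-- Green's `R` relation on `S¹ = WithOne S`: mutual right divisibility. -/
def MRRel (a b : WithOne S) : Prop :=
  (∃ x, a * x = b) ∧ (∃ y, b * y = a)

/-- Green's `L` relation on `S¹ = WithOne S`: mutual left divisibility. -/
def MLRel (a b : WithOne S) : Prop :=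
  (∃ x, x * a = b) ∧ (∃ y, y * b = a)

/-- Green's `H` relation on `S¹`. -/
def MHRel (a b : WithOne S) : Prop :=
  MRRel a b ∧ MLRel a b

/-- The `H`-class of `a ∈ S` (inside `S`). -/
def Hcl (a : S) : Set S :=
  {b | MHRel (a : WithOne S) (b : WithOne S)}

/-- The left Schützenberger group of the `H`-class of `a`: the transformations of
`H` given by left multiplication by elements `s ∈ S¹` with `sH ⊆ H`. -/
def Schutz (a : S) : Set (Hcl a → Hcl a) :=
  {f | ∃ s : WithOne S, ∀ x : Hcl a, ((f x : S) : WithOne S) = s * ((x : S) : WithOne S)}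

end

section Aux

variable {S : Type*} [Semigroup S]

lemma mrrel_refl (a : WithOne S) : MRRel a a := ⟨⟨1, mul_one a⟩, ⟨1, mul_one a⟩⟩

lemma mlrel_refl (a : WithOne S) : MLRel a a := ⟨⟨1, one_mul a⟩, ⟨1, one_mul a⟩⟩

lemma mrrel_symm {a b : WithOne S} (h : MRRel a b) : MRRel b a := ⟨h.2, h.1⟩

lemma mlrel_symm {a b : WithOne S} (h : MLRel a b) : MLRel b a := ⟨h.2, h.1⟩

lemma mrrel_trans {a b c : WithOne S} (h : MRRel a b) (h' : MRRel b c) : MRRel a c := by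
  obtain ⟨⟨x, hx⟩, ⟨y, hy⟩⟩ := h
  obtain ⟨⟨x', hx'⟩, ⟨y', hy'⟩⟩ := h'
  exact ⟨⟨x * x', by rw [← mul_assoc, hx, hx']⟩, ⟨y' * y, by rw [← mul_assoc, hy', hy]⟩⟩

lemma mlrel_trans {a b c : WithOne S} (h : MLRel a b) (h' : MLRel b c) : MLRel a c := by
  obtain ⟨⟨x, hx⟩, ⟨y, hy⟩⟩ := h
  obtain ⟨⟨x', hx'⟩, ⟨y', hy'⟩⟩ := h'
  exact ⟨⟨x' * x, by rw [mul_assoc, hx, hx']⟩, ⟨y * y', by rw [mul_assoc, hy', hy]⟩⟩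

lemma hcl_mr {a x z : S} (hx : x ∈ Hcl a) (hz : z ∈ Hcl a) :
    MRRel (x : WithOne S) (z : WithOne S) :=
  mrrel_trans (mrrel_symm hx.1) hz.1

lemma hcl_ml {a x z : S} (hx : x ∈ Hcl a) (hz : z ∈ Hcl a) :
    MLRel (x : WithOne S) (z : WithOne S) :=
  mlrel_trans (mlrel_symm hx.2) hz.2

/-- Green's lemma core: if `s x = y` and `t y = x` with `x, y ∈ H`, then left
multiplication by `s` maps `H` into `H`, with `t` providing a left inverse. -/
lemma core {a x y : S} (hx : x ∈ Hcl a) (hy : y ∈ Hcl a)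
    {s t : WithOne S} (hs : s * (x : WithOne S) = y) (ht : t * (y : WithOne S) = x)
    {z : S} (hz : z ∈ Hcl a) :
    ∃ w : S, ((w : WithOne S) = s * z) ∧ w ∈ Hcl a ∧ t * (w : WithOne S) = z := by
  obtain ⟨⟨u, hu⟩, ⟨v, hv⟩⟩ := hcl_mr hx hz
  have hsz : s * (z : WithOne S) = (y : WithOne S) * u := by
    rw [← hu, ← mul_assoc, hs]
  obtain ⟨w, hw⟩ : ∃ w : S, ((w : WithOne S) = (y : WithOne S) * u) := by
    induction u using WithOne.recOneCoe with
    | one => exact ⟨y, (mul_one _).symm⟩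
    | coe u' => exact ⟨y * u', rfl⟩
  have hwsz : (w : WithOne S) = s * z := by rw [hw, hsz]
  have htw : t * (w : WithOne S) = z := by
    rw [hw, ← mul_assoc, ht, hu]
  refine ⟨w, hwsz, ⟨?_, ?_⟩, htw⟩
  · -- MRRel ↑a ↑w via ↑y
    refine mrrel_trans hy.1 ⟨⟨u, hw.symm⟩, ⟨v, ?_⟩⟩
    rw [hwsz, mul_assoc, hv, hs]
  · -- MLRel ↑a ↑w via ↑z
    exact mlrel_trans hz.2 ⟨⟨s, hwsz.symm⟩, ⟨t, htw⟩⟩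

/-- Elements of the Schützenberger group agreeing at one point agree everywhere. -/
lemma schutz_unique {a : S} {f g : Hcl a → Hcl a} (hf : f ∈ Schutz a) (hg : g ∈ Schutz a)
    {x : Hcl a} (h : f x = g x) : f = g := by
  obtain ⟨s, hs⟩ := hf
  obtain ⟨s', hs'⟩ := hg
  funext z
  obtain ⟨⟨u, hu⟩, -⟩ := hcl_mr x.2 z.2
  apply Subtype.ext
  have : ((f z : S) : WithOne S) = ((g z : S) : WithOne S) := by
    calc ((f z : S) : WithOne S) = s * z := hs z
    _ = s * ((x : S) : WithOne S) * u := by rw [mul_assoc, hu]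
    _ = ((f x : S) : WithOne S) * u := by rw [hs x]
    _ = ((g x : S) : WithOne S) * u := by rw [h]
    _ = s' * ((x : S) : WithOne S) * u := by rw [hs' x]
    _ = s' * z := by rw [mul_assoc, hu]
    _ = ((g z : S) : WithOne S) := (hs' z).symm
  exact_mod_cast this

end Aux

/-- The Schützenberger group `Γ_H` of an `H`-class `H` of a semigroup `S`
is a group (under composition) acting simply transitively on `H`: it contains the identity,
is closed under composition, every element has an inverse in it, and for all `x, y ∈ H`
there is a unique `g ∈ Γ_H` with `g x = y`. -/
theorem stmt_2 {S : Type*} [Semigroup S] (a : S) :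
    (id ∈ Schutz a) ∧
    (∀ f ∈ Schutz a, ∀ g ∈ Schutz a, (f ∘ g) ∈ Schutz a) ∧
    (∀ f ∈ Schutz a, ∃ g ∈ Schutz a, f ∘ g = id ∧ g ∘ f = id) ∧
    (∀ x y : Hcl a, ∃! f : Hcl a → Hcl a, f ∈ Schutz a ∧ f x = y) := by
  have ha : a ∈ Hcl a := ⟨mrrel_refl _, mlrel_refl _⟩
  refine ⟨⟨1, fun x => (one_mul _).symm⟩, ?_, ?_, ?_⟩
  · -- closure under composition
    rintro f ⟨s, hs⟩ g ⟨t, ht⟩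
    exact ⟨s * t, fun x => by
      simp only [Function.comp_apply, hs (g x), ht x, mul_assoc]⟩
  · -- inverses
    rintro f ⟨s, hs⟩
    set x₀ : Hcl a := ⟨a, ha⟩ with hx₀
    have hsa : s * ((a : S) : WithOne S) = ((f x₀ : S) : WithOne S) := (hs x₀).symm
    obtain ⟨t, ht⟩ := (f x₀).2.2.2
    -- ht : t * ↑(f x₀) = ↑a
    have spec : ∀ z : Hcl a,
        ∃ w : S, ((w : WithOne S) = t * (z : S)) ∧ w ∈ Hcl a ∧
          s * (w : WithOne S) = ((z : S) : WithOne S) :=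
      fun z => core (f x₀).2 ha ht hsa z.2
    refine ⟨fun z => ⟨(spec z).choose, (spec z).choose_spec.2.1⟩,
      ⟨t, fun z => (spec z).choose_spec.1⟩, ?_, ?_⟩
    · funext z
      apply Subtype.ext
      have h1 : ((f ⟨(spec z).choose, (spec z).choose_spec.2.1⟩ : S) : WithOne S)
          = ((z : S) : WithOne S) := by
        rw [hs ⟨(spec z).choose, (spec z).choose_spec.2.1⟩]
        exact (spec z).choose_spec.2.2
      exact_mod_cast h1
    · funext z
      apply Subtype.ext
      obtain ⟨w, hw1, hw2, hw3⟩ := core ha (f x₀).2 hsa ht z.2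
      -- hw1 : ↑w = s * ↑z, hw3 : t * ↑w = ↑z
      have h2 : (((spec (f z)).choose : S) : WithOne S) = ((z : S) : WithOne S) := by
        rw [(spec (f z)).choose_spec.1, hs z, ← hw1, hw3]
      exact_mod_cast h2
  · -- simple transitivity
    intro x y
    obtain ⟨⟨s, hsxy⟩, ⟨t, htyx⟩⟩ := hcl_ml x.2 y.2
    have spec : ∀ z : Hcl a,
        ∃ w : S, ((w : WithOne S) = s * (z : S)) ∧ w ∈ Hcl a ∧
          t * (w : WithOne S) = ((z : S) : WithOne S) :=
      fun z => core x.2 y.2 hsxy htyx z.2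
    set F : Hcl a → Hcl a := fun z => ⟨(spec z).choose, (spec z).choose_spec.2.1⟩ with hF
    have hFS : F ∈ Schutz a := ⟨s, fun z => (spec z).choose_spec.1⟩
    have hFx : F x = y := by
      apply Subtype.ext
      have : ((F x : S) : WithOne S) = ((y : S) : WithOne S) := by
        rw [hF]; rw [(spec x).choose_spec.1, hsxy]
      exact_mod_cast this
    exact ⟨F, ⟨hFS, hFx⟩, fun g hg => schutz_unique hg.1 hFS (hg.2.trans hFx.symm)⟩
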